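/- arXiv:0901.3541 — 2 statements merged into one kernel-verified Lean document; each statement's English description precedes it below -/
import Mathlib

section
/- For every graph F with at least one edge and every positive integer n divisible by |F|, there exists a graph G on n vertices with minimum degree at least ⌈(1 − 1/χ_cr(F))·n⌉ − 1 which does not contain a perfect F-packing. -/
open SimpleGraph

/-- `S` is the vertex set of a copy of `F` in `G`. -/
def SimpleGraph.IsCopy {W V : Type*} (F : SimpleGraph W) (G : SimpleGraph V) (S : Set V) : Prop :=
  ∃ f : F →g G, Function.Injective f ∧ Set.range f = S

/-- `G` has a perfect `F`-packing. -/
def SimpleGraph.HasPerfectPacking {W V : Type*} (F : SimpleGraph W) (G : SimpleGraph V) : Prop :=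
  ∃ Pset : Set (Set V), Pset.PairwiseDisjoint id ∧ ⋃₀ Pset = Set.univ ∧ ∀ S ∈ Pset, F.IsCopy G S

/-- The size of the smallest colour class of a colouring `c` of `F` with
`χ(F)` colours (an "optimal" colouring). -/
noncomputable def SimpleGraph.minClassSize {W : Type*} [Fintype W] (F : SimpleGraph W)
    (c : F.Coloring (Fin F.chromaticNumber.toNat)) : ℕ :=
  sInf { t : ℕ | ∃ i, t = (⇑c ⁻¹' {i}).ncard }

/-- `σ(F)`: the minimum over all optimal colourings of `F` of the size of the
smallest colour class. -/
noncomputable def SimpleGraph.sigmaMin {W : Type*} [Fintype W] (F : SimpleGraph W) : ℕ :=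
  sInf { s : ℕ | ∃ c : F.Coloring (Fin F.chromaticNumber.toNat), s = F.minClassSize c }

/-- The critical chromatic number `χ_cr(F) = (χ(F) - 1)·|F| / (|F| - σ(F))`. -/
noncomputable def SimpleGraph.chiCr {W : Type*} [Fintype W] (F : SimpleGraph W) : ℝ :=
  ((F.chromaticNumber.toNat : ℝ) - 1) * (Fintype.card W) /
    ((Fintype.card W : ℝ) - F.sigmaMin)

private lemma ncard_le_of_val_mem_Ico {n : ℕ} (A : Set (Fin n)) (l b : ℕ)
    (h : ∀ v ∈ A, l ≤ v.val ∧ v.val < l + b) : A.ncard ≤ b := by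
  rw [← Set.ncard_image_of_injective A Fin.val_injective]
  have h2 : Fin.val '' A ⊆ Set.Ico l (l + b) := by
    rintro x ⟨v, hv, rfl⟩
    exact h v hv
  calc (Fin.val '' A).ncard ≤ (Set.Ico l (l + b)).ncard :=
        Set.ncard_le_ncard h2 (Set.finite_Ico _ _)
    _ = b := by
        rw [Set.ncard_eq_toFinset_card', Set.toFinset_Ico, Nat.card_Ico]
        omega


/-- For every graph `F` with an edge and every `n` divisible by `|F|` there is a graph `G`
on `n` vertices of minimum degree at least `⌈(1 - 1/χ_cr(F))n⌉ - 1` with no perfect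
`F`-packing. -/
theorem lower_bound_critical_chromatic {W : Type*} [Fintype W] (F : SimpleGraph W)
    (hF : F.edgeSet.Nonempty) (n : ℕ) (hn : 0 < n) (hdvd : Fintype.card W ∣ n) :
    ∃ G : SimpleGraph (Fin n),
      (∀ v : Fin n, (⌈(1 - 1 / F.chiCr) * n⌉ - 1 : ℤ) ≤ ((G.neighborSet v).ncard : ℤ)) ∧
      ¬ F.HasPerfectPacking G := by
  classical
  obtain ⟨u₀, v₀, huv⟩ : ∃ u v, F.Adj u v := by
    obtain ⟨e, he⟩ := hF
    induction e using Sym2.ind with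
    | _ u v => exact ⟨u, v, he⟩
  set fc := Fintype.card W with hfc
  have hf2 : 2 ≤ fc := Fintype.one_lt_card_iff_nontrivial.2 ⟨⟨u₀, v₀, huv.ne⟩⟩
  have hcol : F.Colorable (F.chromaticNumber.toNat) := F.colorable_chromaticNumber_of_fintype
  set χ := F.chromaticNumber.toNat with hχ
  have h2χ : 2 ≤ χ := by
    by_contra h
    push_neg at h
    obtain ⟨c⟩ := hcol.mono (show χ ≤ 1 by omega)
    exact (c.valid huv) (Subsingleton.elim _ _)
  have hχtop : F.chromaticNumber = (χ : ℕ∞) := by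
    refine (ENat.coe_toNat ?_).symm
    rw [chromaticNumber_ne_top_iff_exists]
    exact ⟨_, hcol⟩
  have hsurj : ∀ C : F.Coloring (Fin χ), Function.Surjective C := by
    rw [← le_chromaticNumber_iff_forall_surjective, hχtop]
  -- class size facts for any optimal coloring
  have hclass_sum : ∀ C : F.Coloring (Fin χ), ∑ i : Fin χ, (⇑C ⁻¹' {i}).ncard = fc := by
    intro C
    have h1 : ∀ i : Fin χ, (⇑C ⁻¹' {i}).ncard
        = (Finset.univ.filter (fun w => C w = i)).card := by
      intro i
      rw [Set.ncard_eq_toFinset_card']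
      congr 1
      ext w
      simp
    rw [hfc, ← Finset.card_univ,
      Finset.card_eq_sum_card_fiberwise (f := fun w => C w) (t := Finset.univ)
        (fun x _ => Finset.mem_univ _)]
    exact Finset.sum_congr rfl fun i _ => h1 i
  have hmin_le : ∀ (C : F.Coloring (Fin χ)) (i : Fin χ),
      F.minClassSize C ≤ (⇑C ⁻¹' {i}).ncard := fun C i => Nat.sInf_le ⟨i, rfl⟩
  have hmin_mem : ∀ C : F.Coloring (Fin χ), ∃ i : Fin χ,
      F.minClassSize C = (⇑C ⁻¹' {i}).ncard := by
    intro C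
    have : F.minClassSize C ∈ { t : ℕ | ∃ i, t = (⇑C ⁻¹' {i}).ncard } :=
      Nat.sInf_mem ⟨_, ⟨⟨0, by omega⟩, rfl⟩⟩
    exact this
  have hmin_pos : ∀ C : F.Coloring (Fin χ), 1 ≤ F.minClassSize C := by
    intro C
    obtain ⟨i, hi⟩ := hmin_mem C
    obtain ⟨w, hw⟩ := hsurj C i
    rw [hi]
    exact Set.ncard_pos (Set.toFinite _) |>.2 ⟨w, hw⟩
  have hmin_mul : ∀ C : F.Coloring (Fin χ), χ * F.minClassSize C ≤ fc := by
    intro C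
    calc χ * F.minClassSize C = ∑ _i : Fin χ, F.minClassSize C := by
          rw [Finset.sum_const, Finset.card_univ, Fintype.card_fin, smul_eq_mul]
      _ ≤ ∑ i : Fin χ, (⇑C ⁻¹' {i}).ncard := Finset.sum_le_sum fun i _ => hmin_le C i
      _ = fc := hclass_sum C
  -- sigma facts
  set σ := F.sigmaMin with hσdef
  obtain ⟨C₀⟩ := hcol
  obtain ⟨Cm, hCm⟩ : ∃ C : F.Coloring (Fin χ), σ = F.minClassSize C := by
    have h : σ ∈ { s : ℕ | ∃ c : F.Coloring (Fin F.chromaticNumber.toNat),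
        s = F.minClassSize c } := Nat.sInf_mem ⟨F.minClassSize C₀, C₀, rfl⟩
    exact h
  have hσ_le : ∀ C : F.Coloring (Fin χ), σ ≤ F.minClassSize C :=
    fun C => Nat.sInf_le ⟨C, rfl⟩
  have hσ1 : 1 ≤ σ := hCm ▸ hmin_pos Cm
  have hσχ : χ * σ ≤ fc := hCm ▸ hmin_mul Cm
  have hσf : σ < fc := by nlinarith
  -- arithmetic setup
  set m := n / fc with hm
  have hnm : n = m * fc := (Nat.div_mul_cancel hdvd).symm
  have hm0 : 0 < m := by
    rcases Nat.eq_zero_or_pos m with h | h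
    · rw [h, zero_mul] at hnm; omega
    · exact h
  set k := χ - 1 with hk
  have hk1 : 1 ≤ k := by omega
  have hk0 : 0 < k := hk1
  have hχk : χ = k + 1 := by omega
  have hsm1 : 1 ≤ σ * m := by
    calc 1 = 1 * 1 := by norm_num
      _ ≤ σ * m := Nat.mul_le_mul hσ1 hm0
  have hsmn : σ * m < n := by
    calc σ * m < fc * m := mul_lt_mul_of_pos_right hσf hm0
      _ = n := by rw [hnm]; ring
  obtain ⟨s, hs⟩ : ∃ s, σ * m = s + 1 := ⟨σ * m - 1, (Nat.succ_pred_eq_of_pos hsm1).symm⟩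
  obtain ⟨a, hA⟩ : ∃ a, n = σ * m + a := ⟨n - σ * m, (Nat.add_sub_cancel' hsmn.le).symm⟩
  have ha1 : 1 ≤ a := by
    rcases Nat.eq_zero_or_pos a with h | h
    · rw [h] at hA; omega
    · exact h
  have hns : n = s + 1 + a := by omega
  have hka : σ * m * k ≤ a := by
    have h1 : χ * σ * m ≤ fc * m := Nat.mul_le_mul hσχ (le_refl m)
    have h2 : χ * σ * m = σ * m * k + σ * m := by rw [hχk]; ring
    have h3 : fc * m = n := by rw [hnm]; ring
    linarith
  obtain ⟨d, hd⟩ : ∃ d, a / k = d := ⟨a / k, rfl⟩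
  have hsd : σ * m ≤ d := hd ▸ (Nat.le_div_iff_mul_le hk0).2 hka
  have hdk1 : k * d ≤ a := by
    rw [← hd]
    calc k * (a / k) = a / k * k := by ring
      _ ≤ a := Nat.div_mul_le_self a k
  have hdk2 : a < k * d + k := by
    have h1 : k * (a / k) + a % k = a := Nat.div_add_mod a k
    have h2 : a % k < k := Nat.mod_lt _ hk0
    rw [← hd]
    linarith
  set Q := d + 1 with hQdef
  have hQ0 : 0 < Q := by omega
  have hsQ : s < Q := by omega
  have hkQ : a + 1 ≤ k * Q := by
    have h3 : k * Q = k * d + k := by rw [hQdef]; ring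
    linarith
  -- the partition function
  set z0 : Fin χ := ⟨0, by omega⟩ with hz0
  set p : Fin n → Fin χ := fun v =>
    if v.val < s then z0
    else ⟨1 + min (k - 1) ((v.val - s) / Q), by
      have h := min_le_left (k - 1) ((v.val - s) / Q)
      omega⟩ with hp
  have hpval0 : ∀ w : Fin n, w.val < s → (p w).val = 0 := by
    intro w hw; rw [hp]; simp [hw, hz0]
  have hpval : ∀ w : Fin n, ¬ w.val < s →
      (p w).val = 1 + min (k - 1) ((w.val - s) / Q) := by
    intro w hw; rw [hp]; simp [hw]
  have hchar : ∀ w : Fin n, p w = z0 ↔ w.val < s := by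
    intro w
    constructor
    · intro h
      by_contra hcon
      have h1 := hpval w hcon
      rw [h] at h1
      have h1' : (0 : ℕ) = 1 + min (k - 1) ((w.val - s) / Q) := h1
      have h2 : (1 : ℕ) ≤ 0 := by rw [h1']; exact Nat.le_add_right 1 _
      exact absurd h2 (by norm_num)
    · intro h
      apply Fin.ext
      rw [hpval0 w h, hz0]
  -- class size bound
  have hclassQ : ∀ v : Fin n, ({ w | p w = p v } : Set (Fin n)).ncard ≤ Q := by
    intro v
    by_cases hv : v.val < s
    · apply ncard_le_of_val_mem_Ico _ 0 Q
      intro w hw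
      simp only [Set.mem_setOf_eq] at hw
      have hw2 : p w = z0 := by rw [hw]; exact (hchar v).2 hv
      have := (hchar w).1 hw2
      omega
    · have hiv := hpval v hv
      set i := min (k - 1) ((v.val - s) / Q) with hidef
      apply ncard_le_of_val_mem_Ico _ (s + i * Q) Q
      intro w hw
      simp only [Set.mem_setOf_eq] at hw
      have hws : ¬ w.val < s := by
        intro hcon
        exact hv ((hchar v).1 (hw ▸ (hchar w).2 hcon))
      have hws' : s ≤ w.val := le_of_not_gt hws
      have hjw := hpval w hws
      have h5 : 1 + min (k - 1) ((w.val - s) / Q) = 1 + i := by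
        rw [← hjw, ← hiv]
        exact congrArg Fin.val hw
      have hij : min (k - 1) ((w.val - s) / Q) = i := by omega
      constructor
      · have h6 : i ≤ (w.val - s) / Q := by
          rw [← hij]; exact min_le_right _ _
        have h7 : i * Q ≤ w.val - s := (Nat.le_div_iff_mul_le hQ0).1 h6
        calc s + i * Q ≤ s + (w.val - s) := Nat.add_le_add_left h7 s
          _ = w.val := Nat.add_sub_cancel' hws'
      · have hsub : w.val - s + s = w.val := Nat.sub_add_cancel hws'
        by_cases h8 : (w.val - s) / Q ≤ i
        · have h9 : w.val - s < (i + 1) * Q :=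
            (Nat.div_lt_iff_lt_mul hQ0).1 (Nat.lt_succ_of_le h8)
          have h10 : (i + 1) * Q = i * Q + Q := by ring
          linarith
        · push_neg at h8
          have h9 : i = k - 1 := by
            rcases le_total (k - 1) ((w.val - s) / Q) with h | h
            · rw [← hij, min_eq_left h]
            · exfalso
              rw [← hij, min_eq_right h] at h8
              exact lt_irrefl _ h8
          have h10 : w.val < n := w.isLt
          have h11 : (k - 1) * Q + Q = k * Q := by
            have hk' : k - 1 + 1 = k := Nat.succ_pred_eq_of_pos hk1
            calc (k - 1) * Q + Q = (k - 1 + 1) * Q := by ring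
              _ = k * Q := by rw [hk']
          rw [h9]
          linarith
  -- part0 bound
  set part0 : Set (Fin n) := { w | p w = z0 } with hpart0
  have hpart0s : part0.ncard ≤ s := by
    apply ncard_le_of_val_mem_Ico _ 0 s
    intro w hw
    have := (hchar w).1 hw
    omega
  -- real / ceiling computation
  have hχR : (χ : ℝ) - 1 = (k : ℝ) := by
    rw [hχk]; push_cast; ring
  have hfc0R : (fc : ℝ) ≠ 0 := by
    have : (0 : ℝ) < fc := by exact_mod_cast (by omega : 0 < fc)
    exact ne_of_gt this
  have hk0R : (k : ℝ) ≠ 0 := by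
    have : (0 : ℝ) < k := by exact_mod_cast hk0
    exact ne_of_gt this
  have hchi : F.chiCr = ((k : ℝ) * fc) / ((fc : ℝ) - σ) := by
    unfold SimpleGraph.chiCr
    rw [← hχ, ← hσdef, ← hfc, hχR]
  have h1chi : 1 / F.chiCr = ((fc : ℝ) - σ) / ((k : ℝ) * fc) := by
    rw [hchi, one_div_div]
  have hnR : (n : ℝ) = (m : ℝ) * fc := by exact_mod_cast hnm
  have haR : (n : ℝ) = (σ : ℝ) * m + a := by exact_mod_cast hA
  have hfa : ((fc : ℝ) - σ) * n = (fc : ℝ) * a := by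
    linear_combination (fc : ℝ) * haR - (σ : ℝ) * hnR
  have hreal : (1 - 1 / F.chiCr) * n = (n : ℝ) - (a : ℝ) / (k : ℝ) := by
    rw [h1chi]
    have key : ((fc : ℝ) - σ) / ((k : ℝ) * fc) * n = (a : ℝ) / k := by
      rw [div_mul_eq_mul_div, hfa, mul_comm (k : ℝ) (fc : ℝ),
        mul_div_mul_left _ _ hfc0R]
    rw [sub_mul, one_mul, key]
  have hceil : (⌈(1 - 1 / F.chiCr) * n⌉ : ℤ) ≤ (n : ℤ) - d := by
    apply Int.ceil_le.2
    rw [hreal]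
    push_cast
    have hda : ((d : ℝ)) ≤ (a : ℝ) / (k : ℝ) := by
      rw [← hd]
      exact Nat.cast_div_le
    linarith
  -- the target graph
  set G' : SimpleGraph (Fin n) :=
    ⟨fun v w => p v ≠ p w, ⟨fun v w h => Ne.symm h⟩, ⟨fun v h => h rfl⟩⟩ with hG'
  refine ⟨G', ?_, ?_⟩
  · -- min degree bound
    intro v
    have hcompl : ({ w | p w = p v } : Set (Fin n)) = (G'.neighborSet v)ᶜ := by
      ext w
      simp only [Set.mem_setOf_eq, Set.mem_compl_iff, SimpleGraph.mem_neighborSet, hG']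
      constructor
      · intro h hne
        exact hne h.symm
      · intro h
        by_contra hne
        exact h fun hc => hne hc.symm
    have hsum := Set.ncard_add_ncard_compl (G'.neighborSet v) (Set.toFinite _) (Set.toFinite _)
    rw [← hcompl] at hsum
    have hnn : Nat.card (Fin n) = n := by simp
    rw [hnn] at hsum
    have hcls := hclassQ v
    have hQd : (Q : ℤ) = (d : ℤ) + 1 := by rw [hQdef]; push_cast; ring
    calc (⌈(1 - 1 / F.chiCr) * n⌉ - 1 : ℤ) ≤ (n : ℤ) - d - 1 := by
          have := hceil; omega
      _ ≤ ((G'.neighborSet v).ncard : ℤ) := by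
          have h1 : ((G'.neighborSet v).ncard : ℤ) + (({ w | p w = p v } : Set (Fin n)).ncard : ℤ)
              = (n : ℤ) := by exact_mod_cast hsum
          have h2 : (({ w | p w = p v } : Set (Fin n)).ncard : ℤ) ≤ (Q : ℤ) := by
            exact_mod_cast hcls
          omega
  · -- no perfect packing
    rintro ⟨P, hdisjP, hcover, hcopy⟩
    have hPfin : P.Finite := Set.toFinite P
    set t := hPfin.toFinset with ht
    have hmem : ∀ S, S ∈ t ↔ S ∈ P := fun S => hPfin.mem_toFinset
    have hSf : ∀ S ∈ P, S.ncard = fc ∧ σ ≤ (S ∩ part0).ncard := by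
      intro S hSP
      obtain ⟨φ, hinj, hrange⟩ := hcopy S hSP
      have hadj : ∀ {x y : W}, F.Adj x y → p (φ x) ≠ p (φ y) := by
        intro x y hxy
        exact φ.map_rel hxy
      set C : F.Coloring (Fin χ) := Coloring.mk (fun w => p (φ w)) hadj with hC
      constructor
      · rw [← hrange, ← Set.image_univ, Set.ncard_image_of_injective _ hinj,
          Set.ncard_univ, Nat.card_eq_fintype_card, hfc]
      · have h1 : σ ≤ (⇑C ⁻¹' {z0}).ncard :=
          le_trans (hσ_le C) (hmin_le C z0)
        have h2 : φ '' (⇑C ⁻¹' {z0}) = S ∩ part0 := by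
          ext v
          constructor
          · rintro ⟨w, hw, rfl⟩
            simp only [Set.mem_preimage, Set.mem_singleton_iff] at hw
            refine ⟨by rw [← hrange]; exact Set.mem_range_self w, ?_⟩
            rw [hpart0]
            exact hw
          · rintro ⟨hvS, hv0⟩
            rw [← hrange] at hvS
            obtain ⟨w, rfl⟩ := hvS
            refine ⟨w, ?_, rfl⟩
            simp only [Set.mem_preimage, Set.mem_singleton_iff]
            exact hv0
        rw [← h2, Set.ncard_image_of_injective _ hinj]
        exact h1
    have hmt : m ≤ t.card := by
      have hsub : (Finset.univ : Finset (Fin n)) ⊆ t.biUnion (fun S => S.toFinset) := by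
        intro v _
        have hv : v ∈ ⋃₀ P := by rw [hcover]; trivial
        obtain ⟨S, hS, hvS⟩ := hv
        exact Finset.mem_biUnion.2 ⟨S, (hmem S).2 hS, Set.mem_toFinset.2 hvS⟩
      have h1 : n ≤ t.card * fc := by
        calc n = (Finset.univ : Finset (Fin n)).card := by simp
          _ ≤ (t.biUnion fun S => S.toFinset).card := Finset.card_le_card hsub
          _ ≤ ∑ S ∈ t, S.toFinset.card := Finset.card_biUnion_le
          _ = ∑ _S ∈ t, fc := by
              apply Finset.sum_congr rfl
              intro S hS
              rw [← Set.ncard_eq_toFinset_card', (hSf S ((hmem S).1 hS)).1]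
          _ = t.card * fc := by rw [Finset.sum_const, smul_eq_mul]
      have h2 : m * fc ≤ t.card * fc := by rw [← hnm]; exact h1
      exact Nat.le_of_mul_le_mul_right h2 (by omega)
    have h2 : t.card * σ ≤ part0.ncard := by
      calc t.card * σ = ∑ _S ∈ t, σ := by rw [Finset.sum_const, smul_eq_mul]
        _ ≤ ∑ S ∈ t, (S ∩ part0).toFinset.card := by
            apply Finset.sum_le_sum
            intro S hS
            rw [← Set.ncard_eq_toFinset_card']
            exact (hSf S ((hmem S).1 hS)).2
        _ = (t.biUnion fun S => (S ∩ part0).toFinset).card := by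
            rw [Finset.card_biUnion]
            intro x hx y hy hxy
            rw [Function.onFun, Set.disjoint_toFinset]
            exact Disjoint.mono Set.inter_subset_left Set.inter_subset_left
              (hdisjP ((hmem x).1 hx) ((hmem y).1 hy) hxy)
        _ ≤ part0.toFinset.card := by
            apply Finset.card_le_card
            intro v hv
            obtain ⟨S, hS, hvS⟩ := Finset.mem_biUnion.1 hv
            exact Set.mem_toFinset.2 (Set.mem_toFinset.1 hvS).2
        _ = part0.ncard := (Set.ncard_eq_toFinset_card' _).symm
    have h4 : σ * m ≤ t.card * σ := by
      calc σ * m ≤ σ * t.card := Nat.mul_le_mul (le_refl σ) hmt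
        _ = t.card * σ := by ring
    omega
end

section
/- Suppose that H = (A', B', E') is a bipartite graph on n ≥ 2 vertices with maximum degree Δ(H) ≤ log₂ n, and suppose m ≥ n⁸. Then every bipartite graph G = (A, B, E) with |A| = |B| = m and at least m²/8 edges contains a copy of H (with A' embedded into A and B' embedded into B). Moreover, R(H) ≤ 2n⁸. -/
open Finset

lemma count_tuples {B : Type*} [Fintype B] (q : B → Prop) [DecidablePred q] (t : ℕ) :
    (Finset.univ.filter fun T : Fin t → B => ∀ j, q (T j)).card
      = (Finset.univ.filter q).card ^ t := by
  classical
  rw [← Fintype.card_subtype, ← Fintype.card_subtype,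
    Fintype.card_congr (Equiv.subtypePiEquivPi (p := fun _ : Fin t => q)),
    Fintype.card_fun, Fintype.card_fin]

lemma greedy {B' : Type*} [Fintype B'] {B : Type*} [Fintype B] [Nonempty B]
    (C : B' → Finset B) (k : ℕ) (hk : Fintype.card B' ≤ k) (hC : ∀ b, k ≤ (C b).card) :
    ∃ ψ : B' → B, Function.Injective ψ ∧ ∀ b, ψ b ∈ C b := by
  classical
  suffices h : ∀ s : Finset B', ∃ ψ : B' → B, Set.InjOn ψ ↑s ∧ ∀ b ∈ s, ψ b ∈ C b by
    obtain ⟨ψ, h1, h2⟩ := h Finset.univ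
    refine ⟨ψ, fun x y hxy => h1 (by simp) (by simp) hxy, fun b => h2 b (mem_univ b)⟩
  intro s
  induction s using Finset.induction_on with
  | empty => exact ⟨fun _ => Classical.arbitrary B, by simp, by simp⟩
  | insert b s hb ih =>
    obtain ⟨ψ, h1, h2⟩ := ih
    have hcard : s.card < Fintype.card B' := by
      have h4 : (insert b s).card ≤ Fintype.card B' := by
        simpa using Finset.card_le_card (Finset.subset_univ (insert b s))
      rw [Finset.card_insert_of_notMem hb] at h4
      omega
    have himg : (s.image ψ).card ≤ s.card := Finset.card_image_le
    have hsd : 0 < (C b \ s.image ψ).card := by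
      have := Finset.le_card_sdiff (s.image ψ) (C b)
      have := hC b
      omega
    obtain ⟨x, hx⟩ := Finset.card_pos.mp hsd
    rw [Finset.mem_sdiff] at hx
    refine ⟨Function.update ψ b x, ?_, ?_⟩
    · intro u hu v hv huv
      simp only [Finset.coe_insert, Set.mem_insert_iff, Finset.mem_coe] at hu hv
      rcases hu with rfl | hu <;> rcases hv with rfl | hv
      · rfl
      · exfalso
        rw [Function.update_self, Function.update_of_ne (by rintro rfl; exact hb hv)] at huv
        exact hx.2 (by rw [huv]; exact Finset.mem_image_of_mem ψ hv)
      · exfalso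
        rw [Function.update_self, Function.update_of_ne (by rintro rfl; exact hb hu)] at huv
        exact hx.2 (by rw [← huv]; exact Finset.mem_image_of_mem ψ hu)
      · rw [Function.update_of_ne (by rintro rfl; exact hb hu),
          Function.update_of_ne (by rintro rfl; exact hb hv)] at huv
        exact h1 hu hv huv
    · intro b' hb'
      rcases Finset.mem_insert.mp hb' with rfl | hb's
      · rw [Function.update_self]; exact hx.1
      · rw [Function.update_of_ne (by rintro rfl; exact hb hb's)]
        exact h2 b' hb's

lemma embed_core {A' B' : Type*} [Fintype A'] [Fintype B'] (R : A' → B' → Prop) (n : ℕ)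
    (hn : n = Fintype.card A' + Fintype.card B') (hn2 : 2 ≤ n)
    (hdB : ∀ b : B', {a : A' | R a b}.ncard ≤ Nat.log 2 n)
    (A B : Type*) [Fintype A] [Fintype B] (S : A → B → Prop) (m : ℕ)
    (hA : Fintype.card A = m) (hB : Fintype.card B = m) (hm : n ^ 8 ≤ m)
    (hE : m ^ 2 ≤ 8 * {p : A × B | S p.1 p.2}.ncard) :
    ∃ (φ : A' → A) (ψ : B' → B), Function.Injective φ ∧ Function.Injective ψ ∧
      ∀ a b, R a b → S (φ a) (ψ b) := by
  classical
  set d := Nat.log 2 n with hd_def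
  have hd1 : 0 < d := Nat.log_pos one_lt_two hn2
  have h2d : 2 ^ d ≤ n := Nat.pow_log_le_self 2 (by omega)
  set t := 2 * d with ht_def
  obtain ⟨t', ht'⟩ : ∃ t', t = t' + 1 := ⟨t - 1, by omega⟩
  have hm0 : 0 < m := lt_of_lt_of_le (by positivity) hm
  have hmn : n ≤ m := le_trans (Nat.le_self_pow (by norm_num) n) hm
  have hn2m : n ^ 2 ≤ m := le_trans (Nat.pow_le_pow_right (by omega) (by norm_num)) hm
  -- edge count
  set E := (Finset.univ.filter fun p : A × B => S p.1 p.2).card with hE_def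
  have hEn : m ^ 2 ≤ 8 * E := by
    have : {p : A × B | S p.1 p.2}.ncard = E := by
      rw [Set.ncard_eq_toFinset_card']; simp [hE_def]
    omega
  set deg : A → ℕ := fun a => (Finset.univ.filter fun b => S a b).card with hdeg_def
  have hE1 : E = ∑ a, deg a := by
    simp only [hE_def, hdeg_def, Finset.card_filter, Fintype.sum_prod_type]
  set X : (Fin t → B) → ℕ :=
    fun T => (Finset.univ.filter fun a : A => ∀ j, S a (T j)).card with hX_def
  set cn : (Fin d → A) → ℕ :=
    fun u => (Finset.univ.filter fun x : B => ∀ i, S (u i) x).card with hcn_def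
  set Y : (Fin t → B) → ℕ :=
    fun T => (Finset.univ.filter fun u : Fin d → A =>
      cn u < n ∧ ∀ j i, S (u i) (T j)).card with hY_def
  set SX := ∑ a, deg a ^ t with hSX_def
  -- step 2 : ∑ X = SX
  have hstep2 : ∑ T, X T = SX := by
    simp only [hX_def, Finset.card_filter]
    rw [Finset.sum_comm]
    refine Finset.sum_congr rfl fun a _ => ?_
    rw [← Finset.card_filter]
    exact count_tuples (fun b => S a b) t
  -- step 3 : ∑ Y ≤ m^d * n^t
  have hstep3 : ∑ T, Y T ≤ m ^ d * n ^ t := by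
    have hswap : ∑ T, Y T = ∑ u : Fin d → A, ∑ T : Fin t → B,
        if cn u < n ∧ ∀ j i, S (u i) (T j) then 1 else 0 := by
      simp only [hY_def, Finset.card_filter]
      exact Finset.sum_comm
    rw [hswap]
    have hbound : ∀ u : Fin d → A, (∑ T : Fin t → B,
        if cn u < n ∧ ∀ j i, S (u i) (T j) then 1 else 0) ≤ n ^ t := by
      intro u
      by_cases hc : cn u < n
      · simp only [hc, true_and]
        rw [← Finset.card_filter, count_tuples (fun x => ∀ i, S (u i) x) t]
        exact Nat.pow_le_pow_left (le_of_lt hc) t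
      · simp [hc]
    calc ∑ u : Fin d → A, ∑ T : Fin t → B,
          (if cn u < n ∧ ∀ j i, S (u i) (T j) then 1 else 0)
        ≤ ∑ _u : Fin d → A, n ^ t := Finset.sum_le_sum fun u _ => hbound u
      _ = m ^ d * n ^ t := by
          rw [Finset.sum_const, Finset.card_univ, Fintype.card_fun, Fintype.card_fin, hA,
            smul_eq_mul]
  -- step 4/5 : power mean, SX ≥ m^t * n^2
  have hpm : E ^ t ≤ m ^ t' * SX := by
    have h := pow_sum_le_card_mul_sum_pow (s := (Finset.univ : Finset A))
      (f := fun a => (deg a : ℝ)) (fun i _ => by positivity) t'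
    rw [Finset.card_univ, hA] at h
    rw [← ht'] at h
    have h3 : ((E ^ t : ℕ) : ℝ) ≤ ((m ^ t' * SX : ℕ) : ℝ) := by
      rw [hE1, hSX_def]; push_cast; exact h
    exact_mod_cast h3
  have hSXge : m ^ t * n ^ 2 ≤ SX := by
    have c1 : 8 ^ t * n ^ 2 ≤ m := by
      have h8 : (8 : ℕ) ^ t = (2 ^ d) ^ 6 := by
        rw [ht_def, show (8 : ℕ) = 2 ^ 3 from rfl, ← pow_mul, ← pow_mul]
        congr 1; ring
      calc 8 ^ t * n ^ 2 = (2 ^ d) ^ 6 * n ^ 2 := by rw [h8]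
        _ ≤ n ^ 6 * n ^ 2 := Nat.mul_le_mul (Nat.pow_le_pow_left h2d 6) le_rfl
        _ = n ^ 8 := by ring
        _ ≤ m := hm
    have c2 : m ^ (2 * t) ≤ 8 ^ t * m ^ t' * SX := by
      calc m ^ (2 * t) = (m ^ 2) ^ t := by rw [← pow_mul]
        _ ≤ (8 * E) ^ t := Nat.pow_le_pow_left hEn t
        _ = 8 ^ t * E ^ t := by rw [mul_pow]
        _ ≤ 8 ^ t * (m ^ t' * SX) := Nat.mul_le_mul le_rfl hpm
        _ = 8 ^ t * m ^ t' * SX := by ring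
    have c3 : (m ^ t * n ^ 2) * (8 ^ t * m ^ t') ≤ m ^ (2 * t) := by
      calc (m ^ t * n ^ 2) * (8 ^ t * m ^ t') = (8 ^ t * n ^ 2) * (m ^ t * m ^ t') := by ring
        _ ≤ m * (m ^ t * m ^ t') := Nat.mul_le_mul c1 le_rfl
        _ = m ^ (t + t' + 1) := by rw [← pow_add, ← pow_succ']
        _ = m ^ (2 * t) := by congr 1; omega
    have hKpos : 0 < 8 ^ t * m ^ t' := by positivity
    have : (m ^ t * n ^ 2) * (8 ^ t * m ^ t') ≤ SX * (8 ^ t * m ^ t') := by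
      calc (m ^ t * n ^ 2) * (8 ^ t * m ^ t') ≤ m ^ (2 * t) := c3
        _ ≤ 8 ^ t * m ^ t' * SX := c2
        _ = SX * (8 ^ t * m ^ t') := by ring
    exact Nat.le_of_mul_le_mul_right this hKpos
  -- step 6 : SY ≤ m^t
  have hSY : m ^ d * n ^ t ≤ m ^ t := by
    have htdd : t = d + d := by omega
    have h1 : (n ^ 2) ^ d ≤ m ^ d := Nat.pow_le_pow_left hn2m d
    have h2 : n ^ t = (n ^ 2) ^ d := by rw [htdd, ← pow_mul]; congr 1; ring
    have h3 : m ^ t = m ^ d * m ^ d := by rw [htdd, pow_add]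
    rw [h2, h3]
    exact Nat.mul_le_mul le_rfl h1
  -- step 7+8 : pigeonhole
  obtain ⟨T, hT⟩ : ∃ T : Fin t → B, Y T + n ≤ X T := by
    by_contra hcon
    push_neg at hcon
    have hsum : ∑ T, (X T + 1) ≤ ∑ T : Fin t → B, (Y T + n) :=
      Finset.sum_le_sum fun T _ => by have := hcon T; omega
    have hcard : (Finset.univ : Finset (Fin t → B)).card = m ^ t := by
      rw [Finset.card_univ, Fintype.card_fun, Fintype.card_fin, hB]
    have hXsum : ∑ T, (X T + 1) = SX + m ^ t := by
      rw [Finset.sum_add_distrib, hstep2, Finset.sum_const, hcard, smul_eq_mul, mul_one]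
    have hYsum : ∑ T : Fin t → B, (Y T + n) = (∑ T, Y T) + m ^ t * n := by
      rw [Finset.sum_add_distrib, Finset.sum_const, hcard, smul_eq_mul]
    rw [hXsum, hYsum] at hsum
    have hmt : 0 < m ^ t := pow_pos hm0 t
    have h7 : m ^ t * n + m ^ t + ∑ T, Y T ≤ SX := by
      have hn22 : n + 2 ≤ n ^ 2 := by
        have h1 : 2 * n ≤ n * n := Nat.mul_le_mul hn2 le_rfl
        rw [pow_two]; omega
      have hSYle : ∑ T, Y T ≤ m ^ t := le_trans hstep3 hSY
      have : m ^ t * (n + 2) ≤ m ^ t * n ^ 2 := Nat.mul_le_mul le_rfl hn22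
      have hx : m ^ t * (n + 2) = m ^ t * n + m ^ t + m ^ t := by ring
      omega
    omega
  -- step 9 : the good set U'
  set U : Finset A := Finset.univ.filter (fun a => ∀ j, S a (T j)) with hU_def
  set D : Finset A := (Finset.univ.filter fun u : Fin d → A =>
      cn u < n ∧ ∀ j i, S (u i) (T j)).image (fun u => u ⟨0, hd1⟩) with hD_def
  set U' : Finset A := U \ D with hU'_def
  have hD_card : D.card ≤ Y T := by
    rw [hD_def, hY_def]; exact Finset.card_image_le
  have hXT : X T = U.card := by rw [hX_def, hU_def]
  have hU'card : n ≤ U'.card := by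
    have h1 := Finset.le_card_sdiff D U
    rw [← hU'_def] at h1
    omega
  have hgood : ∀ u : Fin d → A, (∀ i, u i ∈ U') → n ≤ cn u := by
    intro u hu
    by_contra hlt
    push_neg at hlt
    have hmem : ∀ i, u i ∈ U := fun i => (Finset.mem_sdiff.mp (by
      have := hu i; rwa [hU'_def] at this)).1
    have hfil : u ∈ Finset.univ.filter (fun u : Fin d → A =>
        cn u < n ∧ ∀ j i, S (u i) (T j)) := by
      simp only [Finset.mem_filter, Finset.mem_univ, true_and]
      refine ⟨hlt, fun j i => ?_⟩
      have h2 := hmem i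
      rw [hU_def, Finset.mem_filter] at h2
      exact h2.2 j
    have hD0 : u ⟨0, hd1⟩ ∈ D := by
      rw [hD_def]; exact Finset.mem_image_of_mem _ hfil
    have h3 := hu ⟨0, hd1⟩
    rw [hU'_def, Finset.mem_sdiff] at h3
    exact h3.2 hD0
  -- step 10 : embed A'
  have hcA' : Fintype.card A' ≤ Fintype.card {x // x ∈ U'} := by
    rw [Fintype.card_coe]; omega
  obtain ⟨f⟩ := Function.Embedding.nonempty_of_card_le hcA'
  set φ : A' → A := fun a => (f a : A) with hφ_def
  have hφinj : Function.Injective φ := fun x y h => f.injective (Subtype.ext h)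
  have hφU' : ∀ a, φ a ∈ U' := fun a => (f a).2
  -- step 11 : candidate sets are large
  have hCb : ∀ b : B',
      n ≤ (Finset.univ.filter fun x : B => ∀ a, R a b → S (φ a) x).card := by
    intro b
    set Nf : Finset A' := Finset.univ.filter (fun a => R a b) with hNf_def
    have hNfd : Nf.card ≤ d := by
      have h1 := hdB b
      have h2 : {a : A' | R a b}.ncard = Nf.card := by
        rw [Set.ncard_eq_toFinset_card']
        congr 1
        ext a
        simp [hNf_def]
      omega
    rcases Nf.eq_empty_or_nonempty with hNe | ⟨a₀, ha₀⟩
    · have hnoR : ∀ a : A', ¬ R a b := by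
        intro a ha
        have : a ∈ Nf := by simp [hNf_def, ha]
        rw [hNe] at this
        simp at this
      have heq : (Finset.univ.filter fun x : B => ∀ a, R a b → S (φ a) x)
          = Finset.univ := by
        apply Finset.filter_true_of_mem
        intro x _ a ha
        exact absurd ha (hnoR a)
      rw [heq, Finset.card_univ, hB]
      exact hmn
    · set u : Fin d → A := fun i =>
        if h : (i : ℕ) < Nf.card then φ ((Nf.equivFin.symm ⟨i, h⟩ : {x // x ∈ Nf}) : A')
        else φ a₀ with hu_def
      have hueq : ∀ (i : Fin d) (h : (i : ℕ) < Nf.card),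
          u i = φ ((Nf.equivFin.symm ⟨(i : ℕ), h⟩ : {x // x ∈ Nf}) : A') := by
        intro i h
        simp only [hu_def]
        rw [dif_pos h]
      have hueq' : ∀ (i : Fin d), ¬ ((i : ℕ) < Nf.card) → u i = φ a₀ := by
        intro i h
        simp only [hu_def]
        rw [dif_neg h]
      have huU' : ∀ i, u i ∈ U' := by
        intro i
        by_cases h : (i : ℕ) < Nf.card
        · rw [hueq i h]; exact hφU' _
        · rw [hueq' i h]; exact hφU' _
      have hcover : ∀ a ∈ Nf, ∃ i : Fin d, u i = φ a := by
        intro a ha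
        obtain ⟨j, hj⟩ : ∃ j : Fin Nf.card, Nf.equivFin.symm j = ⟨a, ha⟩ :=
          ⟨Nf.equivFin ⟨a, ha⟩, Equiv.symm_apply_apply _ _⟩
        have hjd : (j : ℕ) < d := lt_of_lt_of_le j.2 hNfd
        refine ⟨⟨(j : ℕ), hjd⟩, ?_⟩
        rw [hueq ⟨(j : ℕ), hjd⟩ j.2]
        have he : (⟨((⟨(j : ℕ), hjd⟩ : Fin d) : ℕ), j.2⟩ : Fin Nf.card) = j := rfl
        rw [he, hj]
      have hsub : (Finset.univ.filter fun x : B => ∀ i, S (u i) x) ⊆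
          Finset.univ.filter fun x : B => ∀ a, R a b → S (φ a) x := by
        intro x hx
        simp only [Finset.mem_filter, Finset.mem_univ, true_and] at hx ⊢
        intro a ha
        obtain ⟨i, hi⟩ := hcover a (by simp [hNf_def, ha])
        rw [← hi]
        exact hx i
      exact le_trans (hgood u huU') (Finset.card_le_card hsub)
  -- step 12 : greedy embedding of B'
  have hNB : Nonempty B := by
    rw [← Fintype.card_pos_iff, hB]; omega
  obtain ⟨ψ, hψinj, hψmem⟩ := greedy
    (fun b => Finset.univ.filter fun x : B => ∀ a, R a b → S (φ a) x) n (by omega) hCb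
  refine ⟨φ, ψ, hφinj, hψinj, fun a b hab => ?_⟩
  have h1 := hψmem b
  rw [Finset.mem_filter] at h1
  exact h1.2 a hab

open SimpleGraph

/-- `R(H) ≤ N`: every red/blue colouring of the edges of the complete graph on `N`
vertices contains a monochromatic copy of `H`. -/
def RamseyLE {W : Type*} (H : SimpleGraph W) (N : ℕ) : Prop :=
  ∀ col : Sym2 (Fin N) → Bool, ∃ (b : Bool) (φ : W → Fin N),
    Function.Injective φ ∧ ∀ v w, H.Adj v w → col s(φ v, φ w) = b

/-- The bipartite graph with vertex classes `A` and `B` determined by the relation `R`. -/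
def biGraph {A B : Type*} (R : A → B → Prop) : SimpleGraph (A ⊕ B) where
  Adj x y := (∃ a b, x = Sum.inl a ∧ y = Sum.inr b ∧ R a b) ∨
             (∃ a b, x = Sum.inr b ∧ y = Sum.inl a ∧ R a b)
  symm := by
    constructor
    rintro x y (⟨a, b, rfl, rfl, h⟩ | ⟨a, b, rfl, rfl, h⟩)
    · exact Or.inr ⟨a, b, rfl, rfl, h⟩
    · exact Or.inl ⟨a, b, rfl, rfl, h⟩
  loopless := by
    constructor
    rintro x (⟨a, b, rfl, h, -⟩ | ⟨a, b, rfl, h, -⟩) <;> simp_all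



/-- Any bipartite graph `H` on `n ≥ 2` vertices of maximum degree at most `log₂ n` embeds
into any bipartite graph with vertex classes of size `m ≥ n⁸` and at least `m²/8` edges;
in particular `R(H) ≤ 2n⁸`. -/
theorem bipartite_embedding_and_ramsey (A' B' : Type*) [Fintype A'] [Fintype B']
    (R : A' → B' → Prop) (n : ℕ)
    (hn : n = Fintype.card A' + Fintype.card B') (hn2 : 2 ≤ n)
    (hdegA : ∀ a : A', ({b : B' | R a b}.ncard : ℝ) ≤ Real.logb 2 n)
    (hdegB : ∀ b : B', ({a : A' | R a b}.ncard : ℝ) ≤ Real.logb 2 n) :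
    (∀ (A B : Type) [Fintype A] [Fintype B] (S : A → B → Prop) (m : ℕ),
      Fintype.card A = m → Fintype.card B = m → n ^ 8 ≤ m →
      (m : ℝ) ^ 2 / 8 ≤ ({p : A × B | S p.1 p.2}.ncard : ℝ) →
      ∃ (φ : A' → A) (ψ : B' → B), Function.Injective φ ∧ Function.Injective ψ ∧
        ∀ a b, R a b → S (φ a) (ψ b)) ∧
    RamseyLE (biGraph R) (2 * n ^ 8) := by
  classical
  have hlog : ∀ k : ℕ, (k : ℝ) ≤ Real.logb 2 n → k ≤ Nat.log 2 n := by
    intro k hk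
    have hnpos : (0 : ℝ) < n := by
      have : 0 < n := by omega
      exact_mod_cast this
    have h1 : (2 : ℝ) ^ (k : ℝ) ≤ (2 : ℝ) ^ Real.logb 2 n :=
      Real.rpow_le_rpow_of_exponent_le one_le_two hk
    rw [Real.rpow_logb (by norm_num) (by norm_num) hnpos] at h1
    have h2 : ((2 : ℕ) ^ k : ℝ) ≤ (n : ℝ) := by
      push_cast
      rw [← Real.rpow_natCast 2 k]
      exact h1
    have h3 : (2 : ℕ) ^ k ≤ n := by exact_mod_cast h2
    exact (Nat.le_log_iff_pow_le one_lt_two (by omega)).mpr h3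
  have hdB : ∀ b : B', {a : A' | R a b}.ncard ≤ Nat.log 2 n := fun b => hlog _ (hdegB b)
  constructor
  · intro A B _ _ S m hA hB hm hE
    apply embed_core R n hn hn2 hdB A B S m hA hB hm
    have h8 : ((m : ℝ)) ^ 2 ≤ 8 * ({p : A × B | S p.1 p.2}.ncard : ℝ) := by linarith
    exact_mod_cast h8
  · intro col
    set e : Fin (n ^ 8) ⊕ Fin (n ^ 8) ≃ Fin (2 * n ^ 8) :=
      finSumFinEquiv.trans (finCongr (two_mul (n ^ 8)).symm) with he_def
    have hcount : (Finset.univ.filter fun p : Fin (n ^ 8) × Fin (n ^ 8) =>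
          col s(e (Sum.inl p.1), e (Sum.inr p.2)) = true).card
        + (Finset.univ.filter fun p : Fin (n ^ 8) × Fin (n ^ 8) =>
          col s(e (Sum.inl p.1), e (Sum.inr p.2)) = false).card = (n ^ 8) ^ 2 := by
      have h1 := Finset.card_filter_add_card_filter_not
        (s := (Finset.univ : Finset (Fin (n ^ 8) × Fin (n ^ 8))))
        (p := fun p => col s(e (Sum.inl p.1), e (Sum.inr p.2)) = true)
      have h2 : (Finset.univ.filter fun p : Fin (n ^ 8) × Fin (n ^ 8) =>
          ¬ col s(e (Sum.inl p.1), e (Sum.inr p.2)) = true)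
          = (Finset.univ.filter fun p : Fin (n ^ 8) × Fin (n ^ 8) =>
          col s(e (Sum.inl p.1), e (Sum.inr p.2)) = false) := by
        apply Finset.filter_congr
        intro p _
        simp [Bool.not_eq_true]
      rw [h2] at h1
      rw [h1, Finset.card_univ, Fintype.card_prod, Fintype.card_fin]
      ring
    obtain ⟨c, hc⟩ : ∃ c : Bool, (n ^ 8) ^ 2 ≤ 2 * (Finset.univ.filter fun p : Fin (n ^ 8) × Fin (n ^ 8) =>
        col s(e (Sum.inl p.1), e (Sum.inr p.2)) = c).card := by
      by_contra hcon
      push_neg at hcon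
      have h1 := hcon true
      have h2 := hcon false
      omega
    have hnc : {p : Fin (n ^ 8) × Fin (n ^ 8) | col s(e (Sum.inl p.1), e (Sum.inr p.2)) = c}.ncard
        = (Finset.univ.filter fun p : Fin (n ^ 8) × Fin (n ^ 8) =>
          col s(e (Sum.inl p.1), e (Sum.inr p.2)) = c).card := by
      rw [Set.ncard_eq_toFinset_card']
      congr 1
      ext p
      simp
    obtain ⟨φ, ψ, hφ, hψ, hS⟩ := embed_core R n hn hn2 hdB (Fin (n ^ 8)) (Fin (n ^ 8))
      (fun p q => col s(e (Sum.inl p), e (Sum.inr q)) = c) (n ^ 8)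
      (Fintype.card_fin (n ^ 8)) (Fintype.card_fin (n ^ 8)) le_rfl (by rw [hnc]; omega)
    refine ⟨c, Sum.elim (fun a => e (Sum.inl (φ a))) (fun b => e (Sum.inr (ψ b))), ?_, ?_⟩
    · intro x y hxy
      rcases x with a1 | b1 <;> rcases y with a2 | b2 <;>
        simp only [Sum.elim_inl, Sum.elim_inr] at hxy <;>
        have h := e.injective hxy
      · rw [hφ (Sum.inl.inj h)]
      · exact absurd h (by simp)
      · exact absurd h (by simp)
      · rw [hψ (Sum.inr.inj h)]
    · intro v w hvw
      obtain (⟨a, b, rfl, rfl, hab⟩ | ⟨a, b, rfl, rfl, hab⟩) := hvw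
      · simp only [Sum.elim_inl, Sum.elim_inr]
        exact hS a b hab
      · simp only [Sum.elim_inl, Sum.elim_inr]
        rw [Sym2.eq_swap]
        exact hS a b hab
end
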